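/- There exists a constant c > 0 such that the following holds. Let B ≥ 1, let ε ∈ (0, 1/2], and let J be a demand multiset. Let S be the sub-multiset of J consisting of all elements smaller than ε², and let M = J − S, with elements listed in nonincreasing order s_1 ≥ s_2 ≥ … ≥ s_n, where n ≥ 1; set q = ⌈ε³·n⌉. Let M̃ be the multiset consisting of, for each index i with q < i ≤ n, the value s_{q·⌊(i−1)/q⌋ + 1}, and let S̃ be the multiset consisting of ⌈(Σ_{s ∈ S} s)/ε⌉ copies of the value ε. Then LP_mach(S̃ + M̃) ≤ (1 + c·ε)·LP_mach(J) + c. -/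

import Mathlib

open scoped BigOperators

/-- A demand multiset for failover capacity `B`: every size lies in `(0, min 1 (B/2)]`. -/
def IsDemandMultiset (B : ℝ) (J : Multiset ℝ) : Prop :=
  ∀ s ∈ J, 0 < s ∧ s ≤ min 1 (B / 2)

/-- A configuration: a multiset of sizes in `(0, min 1 (B/2)]` with total size at most 1
and total size plus maximum size at most `B`. -/
def IsConfig (B : ℝ) (C : Multiset ℝ) : Prop :=
  IsDemandMultiset B C ∧ C.sum ≤ 1 ∧ ∀ s ∈ C, C.sum + s ≤ B

/-- A feasible solution of the demand multiset `J` on `m` machines: each demand is assigned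
to an unordered pair of distinct machines (represented by a symmetric, diagonal-free
family `A u v` of multisets of demands whose total is `J`), satisfying, at every machine `u`,
the Nominal constraint `L_u ≤ 1` and the Failover constraint `L_u + max_{v ≠ u} L_{uv} ≤ B`. -/
def IsFeasibleSolution (B : ℝ) (J : Multiset ℝ) (m : ℕ) : Prop :=
  ∃ A : Fin m → Fin m → Multiset ℝ,
    (∀ u v, A u v = A v u) ∧
    (∀ u, A u u = 0) ∧
    (∑ p ∈ Finset.univ.filter (fun p : Fin m × Fin m => p.1 < p.2), A p.1 p.2) = J ∧
    (∀ u, (∑ v, (A u v).sum) ≤ 1) ∧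
    (∀ u v, v ≠ u → (∑ w, (A u w).sum) + (A u v).sum ≤ B)

/-- A feasible solution of the configuration LP of `J`: a finitely supported nonnegative
vector over configurations whose elements are size values occurring in `J`, covering each
distinct size value `t` at least `2 · mult_t(J)` times. -/
def IsLPSolution (B : ℝ) (J : Multiset ℝ) (x : Multiset ℝ →₀ ℝ) : Prop :=
  (∀ C, 0 ≤ x C) ∧
  (∀ C ∈ x.support, IsConfig B C ∧ ∀ s ∈ C, s ∈ J) ∧
  (∀ t ∈ J, 2 * (J.count t : ℝ) ≤ ∑ C ∈ x.support, x C * (C.count t : ℝ))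

/-- The optimal value `LP_mach(J)` of the configuration LP of `J`. -/
noncomputable def LPmach (B : ℝ) (J : Multiset ℝ) : ℝ :=
  sInf {v | ∃ x : Multiset ℝ →₀ ℝ, IsLPSolution B J x ∧ (∑ C ∈ x.support, x C) = v}


namespace Stmt13Aux

/-- weighted sum of a finsupp against a weight function -/
noncomputable def wsum (w : Multiset ℝ → ℝ) (z : Multiset ℝ →₀ ℝ) : ℝ :=
  z.sum fun C p => p * w C

lemma wsum_eq_support_sum (w : Multiset ℝ → ℝ) (z : Multiset ℝ →₀ ℝ) :
    wsum w z = ∑ C ∈ z.support, z C * w C := rfl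

lemma wsum_add (w : Multiset ℝ → ℝ) (z₁ z₂ : Multiset ℝ →₀ ℝ) :
    wsum w (z₁ + z₂) = wsum w z₁ + wsum w z₂ :=
  Finsupp.sum_add_index' (fun _ => zero_mul _) (fun _ b₁ b₂ => add_mul b₁ b₂ _)

lemma wsum_smul (w : Multiset ℝ → ℝ) (a : ℝ) (z : Multiset ℝ →₀ ℝ) :
    wsum w (a • z) = a * wsum w z := by
  unfold wsum
  have h1 : ((a • z).sum fun C p => p * w C) = z.sum fun C p => (a * p) * w C :=
    Finsupp.sum_smul_index (fun i => zero_mul _)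
  rw [h1, Finsupp.mul_sum]
  exact Finsupp.sum_congr fun C _ => by ring

lemma wsum_single (w : Multiset ℝ → ℝ) (C : Multiset ℝ) (a : ℝ) :
    wsum w (Finsupp.single C a) = a * w C :=
  Finsupp.sum_single_index (zero_mul _)

lemma wsum_finset_sum (w : Multiset ℝ → ℝ) {ι : Type*} (F : Finset ι) (f : ι → Multiset ℝ →₀ ℝ) :
    wsum w (∑ i ∈ F, f i) = ∑ i ∈ F, wsum w (f i) :=
  map_sum (AddMonoidHom.mk' (wsum w) (wsum_add w)) f F

lemma wsum_mapDomain (w : Multiset ℝ → ℝ) (f : Multiset ℝ → Multiset ℝ) (z : Multiset ℝ →₀ ℝ) :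
    wsum w (Finsupp.mapDomain f z) = z.sum fun C p => p * w (f C) :=
  Finsupp.sum_mapDomain_index (fun _ => zero_mul _) (fun _ b₁ b₂ => add_mul b₁ b₂ _)

lemma wsum_nonneg (w : Multiset ℝ → ℝ) (z : Multiset ℝ →₀ ℝ)
    (hz : ∀ C, 0 ≤ z C) (hw : ∀ C, 0 ≤ w C) : 0 ≤ wsum w z :=
  Finset.sum_nonneg fun C _ => mul_nonneg (hz C) (hw C)

lemma wsum_mono (w w' : Multiset ℝ → ℝ) (z : Multiset ℝ →₀ ℝ)
    (hz : ∀ C, 0 ≤ z C) (hw : ∀ C ∈ z.support, w C ≤ w' C) : wsum w z ≤ wsum w' z :=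
  Finset.sum_le_sum fun C hC => mul_le_mul_of_nonneg_left (hw C hC) (hz C)

lemma wsum_sub (w w' : Multiset ℝ → ℝ) (z : Multiset ℝ →₀ ℝ) :
    wsum (fun C => w C - w' C) z = wsum w z - wsum w' z := by
  unfold wsum Finsupp.sum
  rw [← Finset.sum_sub_distrib]
  exact Finset.sum_congr rfl fun C _ => by ring

lemma wsum_div (w : Multiset ℝ → ℝ) (c : ℝ) (z : Multiset ℝ →₀ ℝ) :
    wsum (fun C => w C / c) z = wsum w z / c := by
  unfold wsum Finsupp.sum
  rw [Finset.sum_div]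
  exact Finset.sum_congr rfl fun C _ => by ring

lemma wsum_const (c : ℝ) (z : Multiset ℝ →₀ ℝ) :
    wsum (fun _ => c) z = c * wsum (fun _ => 1) z := by
  unfold wsum Finsupp.sum
  rw [Finset.mul_sum]
  exact Finset.sum_congr rfl fun C _ => by ring

lemma toList_map_sum (s : Multiset ℝ) (f : ℝ → ℝ) :
    (s.toList.map f).sum = (s.map f).sum := by
  conv_rhs => rw [← Multiset.coe_toList s]
  rfl

lemma toList_sum (s : Multiset ℝ) : s.toList.sum = s.sum := by
  conv_rhs => rw [← Multiset.coe_toList s]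
  rfl

lemma mapDomain_nonneg (f : Multiset ℝ → Multiset ℝ) (z : Multiset ℝ →₀ ℝ)
    (hz : ∀ C, 0 ≤ z C) : ∀ C, 0 ≤ Finsupp.mapDomain f z C := by
  intro b
  rw [Finsupp.mapDomain, Finsupp.sum_apply]
  refine Finset.sum_nonneg fun a _ => ?_
  show 0 ≤ (Finsupp.single (f a) (z a)) b
  rw [Finsupp.single_apply]
  split
  · exact hz a
  · exact le_refl 0

/-- the replacement step -/
noncomputable def stepF (T : Finset ℝ) (κ : ℝ → ℝ → ℝ) (u : ℝ) (acc : Multiset ℝ →₀ ℝ) :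
    Multiset ℝ →₀ ℝ :=
  (∑ t ∈ T, κ u t • acc.mapDomain (t ::ₘ ·)) + (1 - ∑ t ∈ T, κ u t) • acc

noncomputable def DLF (T : Finset ℝ) (κ : ℝ → ℝ → ℝ) : List ℝ → (Multiset ℝ →₀ ℝ)
  | [] => Finsupp.single 0 1
  | u :: l => stepF T κ u (DLF T κ l)

lemma massF_DLF (T : Finset ℝ) (κ : ℝ → ℝ → ℝ) (l : List ℝ) :
    wsum (fun _ => 1) (DLF T κ l) = 1 := by
  induction l with
  | nil => simp [DLF, wsum_single]
  | cons u l ih =>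
    rw [DLF, stepF, wsum_add, wsum_finset_sum, wsum_smul]
    have : ∀ t ∈ T, wsum (fun _ => (1:ℝ)) (κ u t • (DLF T κ l).mapDomain (t ::ₘ ·))
        = κ u t := by
      intro t _
      rw [wsum_smul, wsum_mapDomain]
      rw [show ((DLF T κ l).sum fun C p => p * (1:ℝ)) = wsum (fun _ => 1) (DLF T κ l) from rfl]
      rw [ih]; ring
    rw [Finset.sum_congr rfl this, ih]; ring

lemma covF_DLF (T : Finset ℝ) (κ : ℝ → ℝ → ℝ) (t : ℝ) (ht : t ∈ T) (l : List ℝ) :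
    wsum (fun C => (C.count t : ℝ)) (DLF T κ l) = (l.map (fun u => κ u t)).sum := by
  induction l with
  | nil => simp [DLF, wsum_single]
  | cons u l ih =>
    rw [DLF, stepF, wsum_add, wsum_finset_sum, wsum_smul]
    have key : ∀ t' ∈ T, wsum (fun C => (C.count t : ℝ)) (κ u t' • (DLF T κ l).mapDomain (t' ::ₘ ·))
        = κ u t' * ((l.map (fun u => κ u t)).sum + if t = t' then 1 else 0) := by
      intro t' _
      rw [wsum_smul, wsum_mapDomain]
      have expand : ((DLF T κ l).sum fun C p => p * ((t' ::ₘ C).count t : ℝ))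
          = ((DLF T κ l).sum fun C p => p * (C.count t : ℝ))
            + ((DLF T κ l).sum fun C p => p * (if t = t' then 1 else 0)) := by
        rw [← Finsupp.sum_add]
        apply Finsupp.sum_congr
        intro C _
        rw [Multiset.count_cons]
        push_cast
        ring
      have second : ((DLF T κ l).sum fun C p => p * (if t = t' then (1:ℝ) else 0))
          = if t = t' then 1 else 0 := by
        by_cases h : t = t'
        · simp only [h, if_true, mul_one]
          have := massF_DLF T κ l
          unfold wsum at this
          simpa using this
        · simp [h]
      rw [expand, second]
      rw [show ((DLF T κ l).sum fun C p => p * ((C.count t : ℕ) : ℝ)) = wsum (fun C => (C.count t : ℝ)) (DLF T κ l) from rfl, ih]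
    rw [Finset.sum_congr rfl key]
    rw [Finset.sum_congr rfl (fun t' ht' => mul_add (κ u t') _ _)]
    rw [Finset.sum_add_distrib]
    have pick : (∑ t' ∈ T, κ u t' * if t = t' then (1:ℝ) else 0) = κ u t := by
      rw [Finset.sum_congr rfl (fun t' _ => by rw [mul_ite, mul_one, mul_zero])]
      rw [Finset.sum_ite_eq T t (fun t' => κ u t'), if_pos ht]
    rw [pick, ih, ← Finset.sum_mul]
    simp only [List.map_cons, List.sum_cons]
    ring

lemma DLF_nonneg (T : Finset ℝ) (κ : ℝ → ℝ → ℝ)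
    (hκ0 : ∀ u t, 0 ≤ κ u t) (hκ1 : ∀ u, ∑ t ∈ T, κ u t ≤ 1) (l : List ℝ) :
    ∀ C, 0 ≤ DLF T κ l C := by
  induction l with
  | nil =>
    intro C
    rw [DLF, Finsupp.single_apply]
    split <;> norm_num
  | cons u l ih =>
    intro C
    rw [DLF, stepF, Finsupp.add_apply]
    apply add_nonneg
    · rw [Finset.sum_apply']
      apply Finset.sum_nonneg
      intro t _
      rw [Finsupp.smul_apply]
      exact mul_nonneg (hκ0 u t) (mapDomain_nonneg _ _ ih C)
    · rw [Finsupp.smul_apply]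
      exact mul_nonneg (by linarith [hκ1 u]) (ih C)

lemma DLF_support (T : Finset ℝ) (κ : ℝ → ℝ → ℝ) (P : ℝ → Prop)
    (hκs : ∀ u t, κ u t ≠ 0 → P t ∧ t ≤ u) (l : List ℝ) (hl : ∀ b ∈ l, 0 ≤ b) :
    ∀ C' ∈ (DLF T κ l).support, C'.sum ≤ l.sum ∧ ∀ a ∈ C', P a ∧ ∃ b ∈ l, a ≤ b := by
  classical
  induction l with
  | nil =>
    intro C' hC'
    have : C' ∈ (Finsupp.single (0 : Multiset ℝ) (1:ℝ)).support := hC'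
    rw [Finsupp.support_single_ne_zero _ (by norm_num)] at this
    rw [Finset.mem_singleton] at this
    subst this
    simp
  | cons u l ih =>
    intro C' hC'
    have hu : 0 ≤ u := hl u (by simp)
    have hl' : ∀ b ∈ l, 0 ≤ b := fun b hb => hl b (by simp [hb])
    rw [DLF, stepF] at hC'
    have hC'' := Finsupp.support_add hC'
    rw [Finset.mem_union] at hC''
    rcases hC'' with h | h
    · have h2 := Finsupp.support_finset_sum h
      rw [Finset.mem_biUnion] at h2
      obtain ⟨t, htT, ht⟩ := h2
      by_cases hκz : κ u t = 0
      · rw [hκz, zero_smul] at ht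
        simp at ht
      · obtain ⟨hPt, htu⟩ := hκs u t hκz
        have h3 := Finsupp.support_smul ht
        have h4 := Finsupp.mapDomain_support h3
        rw [Finset.mem_image] at h4
        obtain ⟨C'', hC''s, rfl⟩ := h4
        obtain ⟨hsum, helt⟩ := ih hl' C'' hC''s
        constructor
        · rw [Multiset.sum_cons, List.sum_cons]
          linarith
        · intro a ha
          rw [Multiset.mem_cons] at ha
          rcases ha with rfl | ha
          · exact ⟨hPt, u, by simp, htu⟩
          · obtain ⟨hPa, b, hb, hab⟩ := helt a ha
            exact ⟨hPa, b, by simp [hb], hab⟩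
    · have h3 := Finsupp.support_smul h
      obtain ⟨hsum, helt⟩ := ih hl' C' h3
      constructor
      · rw [List.sum_cons]; linarith
      · intro a ha
        obtain ⟨hPa, b, hb, hab⟩ := helt a ha
        exact ⟨hPa, b, by simp [hb], hab⟩


/-- double counting: summing filtered cardinalities over the value set -/
lemma sum_card_filter_left (A : Finset ℕ) (F : Finset ℝ) (f : ℕ → ℝ) (P : ℕ → Prop)
    [DecidablePred P] (hf : ∀ i ∈ A, P i → f i ∈ F) :
    ∑ u ∈ F, ((A.filter (fun i => f i = u ∧ P i)).card) = (A.filter P).card := by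
  classical
  simp only [Finset.card_filter]
  rw [Finset.sum_comm]
  apply Finset.sum_congr rfl
  intro i hi
  by_cases hP : P i
  · have : ∀ u ∈ F, (if f i = u ∧ P i then 1 else 0) = if f i = u then 1 else 0 := by
      intro u _
      by_cases h : f i = u <;> simp [h, hP]
    rw [Finset.sum_congr rfl this, Finset.sum_ite_eq F (f i) (fun _ => 1),
      if_pos (hf i hi hP), if_pos hP]
  · have : ∀ u ∈ F, (if f i = u ∧ P i then 1 else 0) = 0 := by
      intro u _
      simp [hP]
    rw [Finset.sum_congr rfl this, Finset.sum_const_zero, if_neg hP]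

lemma sum_card_filter_right (A : Finset ℕ) (F : Finset ℝ) (f : ℕ → ℝ) (P : ℕ → Prop)
    [DecidablePred P] (hf : ∀ i ∈ A, P i → f i ∈ F) :
    ∑ u ∈ F, ((A.filter (fun i => P i ∧ f i = u)).card) = (A.filter P).card := by
  classical
  have : ∀ u ∈ F, (A.filter (fun i => P i ∧ f i = u)).card
      = (A.filter (fun i => f i = u ∧ P i)).card := by
    intro u _
    congr 1
    apply Finset.filter_congr
    intro i _
    simp [and_comm]
  rw [Finset.sum_congr rfl this]
  exact sum_card_filter_left A F f P hf

def gIdx (q j : ℕ) : ℕ := q * ((j - 1) / q) + 1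

noncomputable def NKf (s : ℕ → ℝ) (n q : ℕ) (u t : ℝ) : ℕ :=
  ((Finset.Icc 1 (n - q)).filter (fun i => s i = u ∧ s (gIdx q (i + q)) = t)).card

noncomputable def κf (s : ℕ → ℝ) (M : Multiset ℝ) (n q : ℕ) (u t : ℝ) : ℝ :=
  (NKf s n q u t : ℝ) / (M.count u : ℝ)

noncomputable def σf (ε : ℝ) (C : Multiset ℝ) : ℝ := (C.filter (fun a => a < ε^2)).sum

noncomputable def mf (ε : ℝ) (C : Multiset ℝ) : ℕ := ⌊σf ε C / ε⌋₊ - 1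

noncomputable def lCf (ε : ℝ) (C : Multiset ℝ) : List ℝ := (C.filter (fun a => ¬ a < ε^2)).toList

lemma gIdx_le (q j : ℕ) (hq : 1 ≤ q) (hj : 1 ≤ j) : gIdx q j ≤ j := by
  unfold gIdx
  have h1 : (j - 1) / q * q ≤ j - 1 := Nat.div_mul_le_self _ _
  have : q * ((j - 1) / q) ≤ j - 1 := by rw [mul_comm]; exact h1
  omega

lemma gIdx_pos (q j : ℕ) : 1 ≤ gIdx q j := Nat.le_add_left 1 _

lemma le_gIdx (q i : ℕ) (hq : 1 ≤ q) (hi : 1 ≤ i) : i + 1 ≤ gIdx q (i + q) := by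
  unfold gIdx
  have h1 : q * ((i + q - 1) / q) + (i + q - 1) % q = i + q - 1 := Nat.div_add_mod _ _
  have h2 : (i + q - 1) % q < q := Nat.mod_lt _ (by omega)
  omega



set_option maxHeartbeats 2000000 in
lemma key_transform (B ε : ℝ) (J S M M' S' : Multiset ℝ) (n q : ℕ) (s : ℕ → ℝ)
    (hB : 1 ≤ B) (hε : 0 < ε) (hε2 : ε ≤ 1 / 2) (hJ : IsDemandMultiset B J)
    (hS : S = J.filter (fun a => a < ε ^ 2))
    (hM : M = J - S) (hn : 1 ≤ n)
    (hmono : ∀ i j, 1 ≤ i → i ≤ j → j ≤ n → s j ≤ s i)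
    (hMs : M = (Finset.Icc 1 n).val.map s)
    (hq : q = ⌈ε ^ 3 * (n : ℝ)⌉₊)
    (hM' : M' = (Finset.Ioc q n).val.map (fun i => s (q * ((i - 1) / q) + 1)))
    (hS' : S' = Multiset.replicate ⌈S.sum / ε⌉₊ ε)
    (x : Multiset ℝ →₀ ℝ) (hx : IsLPSolution B J x) :
    ∃ x' : Multiset ℝ →₀ ℝ, IsLPSolution B (S' + M') x' ∧
      (∑ C ∈ x'.support, x' C) ≤ (1 + 8 * ε) * (∑ C ∈ x.support, x C) + 2 := by
  obtain ⟨hx0, hxconf, hxcov⟩ := hx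
  -- basic facts
  have hq1 : 1 ≤ q := by
    rw [hq]
    have h : (0:ℝ) < ε ^ 3 * n := by
      have : (0:ℝ) < (n:ℝ) := by exact_mod_cast hn
      positivity
    exact Nat.one_le_iff_ne_zero.mpr (by
      intro h0
      rw [Nat.ceil_eq_zero] at h0
      linarith)
  have hqn : q ≤ n := by
    rw [hq]
    apply Nat.ceil_le.mpr
    have h1 : ε ^ 3 ≤ 1 := pow_le_one₀ (le_of_lt hε) (by linarith)
    have h2 : (0:ℝ) ≤ (n:ℝ) := Nat.cast_nonneg n
    nlinarith
  have hεB : ε ≤ min 1 (B / 2) := le_min (by linarith) (by linarith)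
  have hMJ : M ≤ J := by rw [hM]; exact Multiset.sub_le_self J S
  have hSJ : S ≤ J := by rw [hS]; exact Multiset.filter_le _ J
  have hMmem : ∀ a ∈ M, a ∈ J := fun a ha => Multiset.mem_of_le hMJ ha
  have hSpos : ∀ a ∈ S, 0 < a := fun a ha => (hJ a (Multiset.mem_of_le hSJ ha)).1
  have hSsum0 : 0 ≤ S.sum := Multiset.sum_nonneg (fun a ha => le_of_lt (hSpos a ha))
  have hMeps : ∀ a ∈ M, ε ^ 2 ≤ a := by
    intro a ha
    by_contra hlt
    push_neg at hlt
    have hcM : M.count a = J.count a - S.count a := by rw [hM, Multiset.count_sub]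
    have hcS : S.count a = J.count a := by
      rw [hS, Multiset.count_filter, if_pos hlt]
    have : M.count a = 0 := by omega
    exact (Multiset.count_ne_zero.mpr ha) this
  have hJM : ∀ a ∈ J, ¬ a < ε ^ 2 → a ∈ M := by
    intro a ha hge
    have hcS : S.count a = 0 := by
      rw [hS, Multiset.count_filter, if_neg hge]
    have hcM : M.count a = J.count a := by rw [hM, Multiset.count_sub, hcS]; omega
    rw [← Multiset.count_pos, hcM, Multiset.count_pos]
    exact ha
  have hJS : ∀ a ∈ J, a < ε ^ 2 → a ∈ S := by
    intro a ha hlt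
    rw [hS, Multiset.mem_filter]
    exact ⟨ha, hlt⟩
  have hgmem : ∀ j, q < j → j ≤ n → gIdx q j ∈ Finset.Icc 1 n := by
    intro j h1 h2
    rw [Finset.mem_Icc]
    exact ⟨gIdx_pos q j, le_trans (gIdx_le q j hq1 (by omega)) h2⟩
  have hM'g : M' = (Finset.Ioc q n).val.map (fun j => s (gIdx q j)) := by
    rw [hM']; rfl
  have hM'M : ∀ a ∈ M', a ∈ M := by
    intro a ha
    rw [hM'g, Multiset.mem_map] at ha
    obtain ⟨j, hj, rfl⟩ := ha
    rw [hMs, Multiset.mem_map]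
    rw [Finset.mem_val, Finset.mem_Ioc] at hj
    exact ⟨gIdx q j, Finset.mem_val.mpr (hgmem j hj.1 hj.2), rfl⟩
  set T := M'.toFinset with hT
  set κ := κf s M n q with hκdef
  -- counting identities
  have hMcount : ∀ u, M.count u = ((Finset.Icc 1 n).filter (fun i => s i = u)).card := by
    intro u
    rw [hMs, Multiset.count_map]
    rw [show ((Finset.Icc 1 n).filter (fun i => s i = u)).card
        = (Multiset.filter (fun i => s i = u) (Finset.Icc 1 n).val).card from rfl]
    congr 1
    apply Multiset.filter_congr
    intro i _
    exact eq_comm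
  have hM'count : ∀ t, M'.count t
      = ((Finset.Ioc q n).filter (fun j => s (gIdx q j) = t)).card := by
    intro t
    rw [hM'g, Multiset.count_map]
    rw [show ((Finset.Ioc q n).filter (fun j => s (gIdx q j) = t)).card
        = (Multiset.filter (fun j => s (gIdx q j) = t) (Finset.Ioc q n).val).card from rfl]
    congr 1
    apply Multiset.filter_congr
    intro i _
    exact eq_comm
  have hshift : ∀ t, ((Finset.Icc 1 (n - q)).filter (fun i => s (gIdx q (i + q)) = t)).card
      = ((Finset.Ioc q n).filter (fun j => s (gIdx q j) = t)).card := by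
    intro t
    apply Finset.card_bij' (fun i _ => i + q) (fun j _ => j - q)
    · intro i hi
      rw [Finset.mem_filter, Finset.mem_Icc] at hi
      rw [Finset.mem_filter, Finset.mem_Ioc]
      exact ⟨⟨by omega, by omega⟩, hi.2⟩
    · intro j hj
      rw [Finset.mem_filter, Finset.mem_Ioc] at hj
      rw [Finset.mem_filter, Finset.mem_Icc]
      refine ⟨⟨by omega, by omega⟩, ?_⟩
      rw [show j - q + q = j from by omega]
      exact hj.2
    · intro i hi; omega
    · intro j hj
      rw [Finset.mem_filter, Finset.mem_Ioc] at hj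
      omega
  have hmemT : ∀ i, 1 ≤ i → i ≤ n - q → s (gIdx q (i + q)) ∈ T := by
    intro i h1 h2
    rw [hT, Multiset.mem_toFinset, hM'g, Multiset.mem_map]
    exact ⟨i + q, Finset.mem_val.mpr (by rw [Finset.mem_Ioc]; omega), rfl⟩
  have hsle : ∀ i, 1 ≤ i → i ≤ n - q → s (gIdx q (i + q)) ≤ s i := by
    intro i h1 h2
    apply hmono i (gIdx q (i + q)) h1
    · have := le_gIdx q i hq1 h1
      omega
    · have := gIdx_le q (i + q) hq1 (by omega)
      omega
  have hκ0 : ∀ u t, 0 ≤ κ u t := by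
    intro u t
    rw [hκdef]
    unfold κf
    positivity
  have hNK : ∀ u, ∑ t ∈ T, (NKf s n q u t) = ((Finset.Icc 1 (n - q)).filter (fun i => s i = u)).card := by
    intro u
    unfold NKf
    apply sum_card_filter_right
    intro i hi hP
    rw [Finset.mem_Icc] at hi
    exact hmemT i hi.1 hi.2
  have hNA_le : ∀ u, ((Finset.Icc 1 (n - q)).filter (fun i => s i = u)).card ≤ M.count u := by
    intro u
    rw [hMcount u]
    apply Finset.card_le_card
    apply Finset.filter_subset_filter
    apply Finset.Icc_subset_Icc le_rfl (Nat.sub_le n q)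
  have hκsum : ∀ u, ∑ t ∈ T, κ u t ≤ 1 := by
    intro u
    rw [hκdef]
    unfold κf
    rw [← Finset.sum_div]
    by_cases hc : (M.count u : ℝ) = 0
    · rw [hc, div_zero]; norm_num
    · have hc' : 0 < (M.count u : ℝ) := lt_of_le_of_ne (Nat.cast_nonneg _) (Ne.symm hc)
      rw [div_le_one hc']
      calc (∑ t ∈ T, (NKf s n q u t : ℝ)) = ((∑ t ∈ T, NKf s n q u t : ℕ) : ℝ) := by push_cast; ring
        _ ≤ (M.count u : ℝ) := by
            rw [hNK u]
            exact_mod_cast hNA_le u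
  have hκs : ∀ u t, κ u t ≠ 0 → t ∈ M' ∧ t ≤ u := by
    intro u t hne
    have hNne : NKf s n q u t ≠ 0 := by
      intro h0
      rw [hκdef] at hne
      unfold κf at hne
      rw [h0] at hne
      simp at hne
    unfold NKf at hNne
    have hne' := Finset.card_pos.mp (Nat.pos_of_ne_zero hNne)
    rw [Finset.filter_nonempty_iff] at hne'
    obtain ⟨i, hiA, hsu, hst⟩ := hne' 
    rw [Finset.mem_Icc] at hiA
    constructor
    · rw [← hst, hM'g, Multiset.mem_map]
      exact ⟨i + q, Finset.mem_val.mpr (by rw [Finset.mem_Ioc]; omega), rfl⟩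
    · rw [← hst, ← hsu]
      exact hsle i hiA.1 hiA.2
  have hκcov : ∀ t ∈ T, ∑ u ∈ M.toFinset, (M.count u : ℝ) * κ u t = (M'.count t : ℝ) := by
    intro t ht
    have h1 : ∀ u ∈ M.toFinset, (M.count u : ℝ) * κ u t = (NKf s n q u t : ℝ) := by
      intro u hu
      rw [hκdef]
      unfold κf
      rw [mul_div_cancel₀]
      exact Nat.cast_ne_zero.mpr (Multiset.count_ne_zero.mpr (Multiset.mem_toFinset.mp hu))
    rw [Finset.sum_congr rfl h1]
    have h2 : ∑ u ∈ M.toFinset, (NKf s n q u t : ℝ)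
        = ((∑ u ∈ M.toFinset, NKf s n q u t : ℕ) : ℝ) := by push_cast; ring
    rw [h2]
    have h3 : ∑ u ∈ M.toFinset, NKf s n q u t
        = ((Finset.Icc 1 (n - q)).filter (fun i => s (gIdx q (i + q)) = t)).card := by
      unfold NKf
      apply sum_card_filter_left
      intro i hi _
      rw [Finset.mem_Icc] at hi
      rw [Multiset.mem_toFinset, hMs, Multiset.mem_map]
      exact ⟨i, Finset.mem_val.mpr (by rw [Finset.mem_Icc]; omega), rfl⟩
    rw [h3, hshift t, ← hM'count t]
  -- facts about configurations in the support of x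
  have hCfacts : ∀ C ∈ x.support, (∀ a ∈ C, 0 < a) ∧ 0 ≤ σf ε C ∧
      (∀ b ∈ lCf ε C, 0 ≤ b ∧ b ∈ C ∧ ¬ b < ε ^ 2) ∧ σf ε C + (lCf ε C).sum = C.sum := by
    intro C hC
    obtain ⟨hconf, hmemJ⟩ := hxconf C hC
    have hpos : ∀ a ∈ C, 0 < a := fun a ha => (hconf.1 a ha).1
    have hσ : 0 ≤ σf ε C := Multiset.sum_nonneg (fun a ha => le_of_lt (hpos a (Multiset.mem_of_mem_filter ha)))
    refine ⟨hpos, hσ, ?_, ?_⟩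
    · intro b hb
      unfold lCf at hb
      rw [Multiset.mem_toList, Multiset.mem_filter] at hb
      exact ⟨le_of_lt (hpos b hb.1), hb.1, hb.2⟩
    · unfold σf lCf
      rw [toList_sum]
      rw [← Multiset.sum_add]
      congr 1
      exact Multiset.filter_add_not _ C
  have hmle : ∀ C, 0 ≤ σf ε C → (mf ε C : ℝ) * ε ≤ σf ε C := by
    intro C hσ
    unfold mf
    have h1 : (↑(⌊σf ε C / ε⌋₊ - 1) : ℝ) ≤ (⌊σf ε C / ε⌋₊ : ℝ) := by
      exact_mod_cast Nat.sub_le _ 1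
    have h2 : (⌊σf ε C / ε⌋₊ : ℝ) ≤ σf ε C / ε := Nat.floor_le (by positivity)
    calc (↑(⌊σf ε C / ε⌋₊ - 1) : ℝ) * ε ≤ (σf ε C / ε) * ε := by
          apply mul_le_mul_of_nonneg_right (le_trans h1 h2) (le_of_lt hε)
      _ = σf ε C := by field_simp
  have hm1 : ∀ C, 0 ≤ σf ε C → mf ε C ≠ 0 → ((mf ε C : ℝ) + 1) * ε ≤ σf ε C := by
    intro C hσ hne
    unfold mf at hne ⊢
    have hfl : 1 ≤ ⌊σf ε C / ε⌋₊ := by omega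
    have h1 : ((⌊σf ε C / ε⌋₊ - 1 : ℕ) : ℝ) + 1 = (⌊σf ε C / ε⌋₊ : ℝ) := by
      rw [Nat.cast_sub hfl]
      ring
    rw [h1]
    have h2 : (⌊σf ε C / ε⌋₊ : ℝ) ≤ σf ε C / ε := Nat.floor_le (by positivity)
    calc (⌊σf ε C / ε⌋₊ : ℝ) * ε ≤ (σf ε C / ε) * ε :=
          mul_le_mul_of_nonneg_right h2 (le_of_lt hε)
      _ = σf ε C := by field_simp
  have hmge : ∀ C, 0 ≤ σf ε C → σf ε C / ε - 2 ≤ (mf ε C : ℝ) := by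
    intro C hσ
    unfold mf
    have h1 : (⌊σf ε C / ε⌋₊ : ℝ) - 1 ≤ ((⌊σf ε C / ε⌋₊ - 1 : ℕ) : ℝ) := by
      rcases Nat.eq_zero_or_pos ⌊σf ε C / ε⌋₊ with h | h
      · rw [h]; norm_num
      · rw [Nat.cast_sub h]; norm_num
    have h2 : σf ε C / ε - 1 ≤ (⌊σf ε C / ε⌋₊ : ℝ) := by
      have := Nat.lt_floor_add_one (σf ε C / ε)
      linarith
    linarith
  -- the transformed solution
  set y := x.sum (fun C w => w • Finsupp.mapDomain
      (· + Multiset.replicate (mf ε C) ε) (DLF T κ (lCf ε C))) with hy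
  set G := max 0 (2 * ((⌈S.sum / ε⌉₊ : ℕ) : ℝ) - wsum (fun C => (mf ε C : ℝ)) x) with hGdef
  set k := ⌊1 / ε⌋₊ - 1 with hkdef
  set w0 := G / (k : ℝ) with hw0def
  set x' := y + Finsupp.single (Multiset.replicate k ε) w0 with hx'def
  set X := ∑ C ∈ x.support, x C with hXdef
  have hX0 : 0 ≤ X := Finset.sum_nonneg (fun C _ => hx0 C)
  have hXw : X = wsum (fun _ => 1) x := by
    rw [wsum_eq_support_sum]
    exact Finset.sum_congr rfl fun C _ => by ring
  have hk1 : 1 ≤ k := by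
    rw [hkdef]
    have : (2 : ℕ) ≤ ⌊1 / ε⌋₊ := by
      apply Nat.le_floor
      rw [le_div_iff₀ hε]
      push_cast
      linarith
    omega
  have hkfl : 2 ≤ ⌊1 / ε⌋₊ := by
    apply Nat.le_floor
    rw [le_div_iff₀ hε]
    push_cast
    linarith
  have hkr : 1 / ε - 2 ≤ (k : ℝ) := by
    rw [hkdef, Nat.cast_sub (by omega)]
    have := Nat.lt_floor_add_one (1 / ε)
    push_cast
    linarith
  have hkε : (k : ℝ) * ε + ε ≤ 1 := by
    rw [hkdef, Nat.cast_sub (by omega)]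
    have h2 : (⌊1 / ε⌋₊ : ℝ) ≤ 1 / ε := Nat.floor_le (by positivity)
    have : ((⌊1 / ε⌋₊ : ℝ) - 1) * ε + ε = (⌊1 / ε⌋₊ : ℝ) * ε := by ring
    rw [Nat.cast_one, this]
    calc (⌊1 / ε⌋₊ : ℝ) * ε ≤ (1 / ε) * ε := mul_le_mul_of_nonneg_right h2 (le_of_lt hε)
      _ = 1 := by field_simp
  have hk0 : (0:ℝ) < (k : ℝ) := by exact_mod_cast hk1
  -- mass of y
  have hwsum_y : ∀ w : Multiset ℝ → ℝ, wsum w y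
      = ∑ C ∈ x.support, x C * ((DLF T κ (lCf ε C)).sum
          (fun D p => p * w (D + Multiset.replicate (mf ε C) ε))) := by
    intro w
    rw [hy]
    rw [show (x.sum fun C w' => w' • Finsupp.mapDomain
        (· + Multiset.replicate (mf ε C) ε) (DLF T κ (lCf ε C)))
      = ∑ C ∈ x.support, x C • Finsupp.mapDomain
        (· + Multiset.replicate (mf ε C) ε) (DLF T κ (lCf ε C)) from rfl]
    rw [wsum_finset_sum]
    apply Finset.sum_congr rfl
    intro C _
    rw [wsum_smul, wsum_mapDomain]
  have hmass_y : wsum (fun _ => 1) y = X := by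
    rw [hwsum_y]
    rw [hXdef]
    apply Finset.sum_congr rfl
    intro C _
    have : ((DLF T κ (lCf ε C)).sum fun D p => p * (1:ℝ)) = 1 := massF_DLF T κ _
    rw [this, mul_one]
  -- coverage of y at values of M'
  have hcovDL : ∀ C ∈ x.support, ∀ t ∈ T,
      wsum (fun D => (D.count t : ℝ)) (DLF T κ (lCf ε C))
        = ∑ u ∈ M.toFinset, (C.count u : ℝ) * κ u t := by
    intro C hC t ht
    rw [covF_DLF T κ t ht]
    unfold lCf
    rw [toList_map_sum]
    rw [Finset.sum_multiset_map_count]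
    have hsub : (Multiset.filter (fun a => ¬ a < ε ^ 2) C).toFinset ⊆ M.toFinset := by
      intro u hu
      rw [Multiset.mem_toFinset, Multiset.mem_filter] at hu
      rw [Multiset.mem_toFinset]
      exact hJM u ((hxconf C hC).2 u hu.1) hu.2
    rw [Finset.sum_subset hsub]
    · apply Finset.sum_congr rfl
      intro u hu
      have hcnt : (Multiset.filter (fun a => ¬ a < ε ^ 2) C).count u = C.count u := by
        rw [Multiset.count_filter, if_pos]
        have : ε ^ 2 ≤ u := hMeps u (Multiset.mem_toFinset.mp hu)
        linarith
      rw [hcnt, nsmul_eq_mul]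
    · intro u _ hu
      rw [Multiset.count_eq_zero_of_notMem (fun hmem => hu (Multiset.mem_toFinset.mpr hmem))]
      simp
  have hmain : ∀ t ∈ T, 2 * (M'.count t : ℝ)
      ≤ ∑ C ∈ x.support, x C * (∑ u ∈ M.toFinset, (C.count u : ℝ) * κ u t) := by
    intro t ht
    have swap : ∑ C ∈ x.support, x C * (∑ u ∈ M.toFinset, (C.count u : ℝ) * κ u t)
        = ∑ u ∈ M.toFinset, (∑ C ∈ x.support, x C * (C.count u : ℝ)) * κ u t := by
      calc ∑ C ∈ x.support, x C * (∑ u ∈ M.toFinset, (C.count u : ℝ) * κ u t)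
          = ∑ C ∈ x.support, ∑ u ∈ M.toFinset, x C * ((C.count u : ℝ) * κ u t) :=
            Finset.sum_congr rfl fun C _ => Finset.mul_sum _ _ _
        _ = ∑ u ∈ M.toFinset, ∑ C ∈ x.support, x C * ((C.count u : ℝ) * κ u t) :=
            Finset.sum_comm
        _ = ∑ u ∈ M.toFinset, (∑ C ∈ x.support, x C * (C.count u : ℝ)) * κ u t := by
            apply Finset.sum_congr rfl
            intro u _
            rw [Finset.sum_mul]
            exact Finset.sum_congr rfl fun C _ => by ring
    rw [swap]
    calc 2 * (M'.count t : ℝ) = 2 * ∑ u ∈ M.toFinset, (M.count u : ℝ) * κ u t := by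
          rw [hκcov t ht]
      _ = ∑ u ∈ M.toFinset, (2 * (M.count u : ℝ)) * κ u t := by
          rw [Finset.mul_sum]
          exact Finset.sum_congr rfl fun u _ => by ring
      _ ≤ ∑ u ∈ M.toFinset, (∑ C ∈ x.support, x C * (C.count u : ℝ)) * κ u t := by
          apply Finset.sum_le_sum
          intro u hu
          apply mul_le_mul_of_nonneg_right _ (hκ0 u t)
          have huM : u ∈ M := Multiset.mem_toFinset.mp hu
          have huJ : u ∈ J := hMmem u huM
          have h1 : (M.count u : ℝ) ≤ (J.count u : ℝ) := by
            exact_mod_cast Multiset.count_le_of_le u hMJ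
          have h2 := hxcov u huJ
          linarith
  -- coverage of y
  have hcovy_M' : ∀ t ∈ T, 2 * (M'.count t : ℝ)
      ≤ ∑ C ∈ x.support, x C * wsum (fun D => (D.count t : ℝ)) (DLF T κ (lCf ε C)) := by
    intro t ht
    calc 2 * (M'.count t : ℝ)
        ≤ ∑ C ∈ x.support, x C * (∑ u ∈ M.toFinset, (C.count u : ℝ) * κ u t) := hmain t ht
      _ = ∑ C ∈ x.support, x C * wsum (fun D => (D.count t : ℝ)) (DLF T κ (lCf ε C)) := by
          apply Finset.sum_congr rfl
          intro C hC
          rw [hcovDL C hC t ht]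
  have hDLnn : ∀ C, ∀ D, 0 ≤ DLF T κ (lCf ε C) D := fun C => DLF_nonneg T κ hκ0 hκsum _
  have hcovy_nonneg : ∀ t : ℝ,
      0 ≤ ∑ C ∈ x.support, x C * wsum (fun D => (D.count t : ℝ)) (DLF T κ (lCf ε C)) := by
    intro t
    apply Finset.sum_nonneg
    intro C _
    exact mul_nonneg (hx0 C) (wsum_nonneg _ _ (hDLnn C) (fun D => Nat.cast_nonneg _))
  have hcovy_any : ∀ t : ℝ, 2 * (M'.count t : ℝ)
      ≤ ∑ C ∈ x.support, x C * wsum (fun D => (D.count t : ℝ)) (DLF T κ (lCf ε C)) := by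
    intro t
    by_cases ht : t ∈ T
    · exact hcovy_M' t ht
    · have : M'.count t = 0 := by
        rw [Multiset.count_eq_zero]
        intro hmem
        exact ht (Multiset.mem_toFinset.mpr hmem)
      rw [this]
      simpa using hcovy_nonneg t
  -- decomposition of the coverage of y
  have hcovy_split : ∀ t : ℝ, wsum (fun D => (D.count t : ℝ)) y
      = (∑ C ∈ x.support, x C * wsum (fun D => (D.count t : ℝ)) (DLF T κ (lCf ε C)))
        + (if ε = t then wsum (fun C => (mf ε C : ℝ)) x else 0) := by
    intro t
    rw [hwsum_y]
    have hterm : ∀ C ∈ x.support,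
        x C * ((DLF T κ (lCf ε C)).sum
          (fun D p => p * (((D + Multiset.replicate (mf ε C) ε).count t : ℕ) : ℝ)))
        = x C * wsum (fun D => (D.count t : ℝ)) (DLF T κ (lCf ε C))
          + (if ε = t then x C * (mf ε C : ℝ) else 0) := by
      intro C _
      have hsplit : ((DLF T κ (lCf ε C)).sum
          (fun D p => p * (((D + Multiset.replicate (mf ε C) ε).count t : ℕ) : ℝ)))
          = wsum (fun D => (D.count t : ℝ)) (DLF T κ (lCf ε C))
            + (if ε = t then (mf ε C : ℝ) else 0) := by
        have e1 : ((DLF T κ (lCf ε C)).sum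
            (fun D p => p * (((D + Multiset.replicate (mf ε C) ε).count t : ℕ) : ℝ)))
            = ((DLF T κ (lCf ε C)).sum fun D p => p * ((D.count t : ℕ) : ℝ))
              + ((DLF T κ (lCf ε C)).sum fun D p =>
                  p * (if ε = t then (mf ε C : ℝ) else 0)) := by
          rw [← Finsupp.sum_add]
          apply Finsupp.sum_congr
          intro D _
          rw [Multiset.count_add, Multiset.count_replicate]
          by_cases h : ε = t
          · rw [if_pos h, if_pos h]
            push_cast
            ring
          · rw [if_neg h, if_neg h]
            push_cast
            ring
        rw [e1]
        congr 1
        by_cases h : ε = t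
        · rw [if_pos h]
          have hmm : ((DLF T κ (lCf ε C)).sum fun D p => p * (mf ε C : ℝ))
              = (mf ε C : ℝ) * ((DLF T κ (lCf ε C)).sum fun D p => p * 1) := by
            rw [Finsupp.mul_sum]
            apply Finsupp.sum_congr
            intro D _
            ring
          rw [hmm, show ((DLF T κ (lCf ε C)).sum fun D p => p * (1:ℝ))
              = wsum (fun _ => 1) (DLF T κ (lCf ε C)) from rfl, massF_DLF T κ, mul_one]
        · simp [h]
      rw [hsplit]
      by_cases h : ε = t
      · rw [if_pos h, if_pos h]; ring
      · rw [if_neg h, if_neg h]; ring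
    rw [Finset.sum_congr rfl hterm, Finset.sum_add_distrib]
    congr 1
    by_cases h : ε = t
    · simp only [if_pos h]
      rfl
    · simp only [if_neg h, Finset.sum_const_zero]
  -- lower bound on the total size of small items covered by x
  have hσeq : ∀ C ∈ x.support, σf ε C = ∑ u ∈ S.toFinset, (C.count u : ℝ) * u := by
    intro C hC
    unfold σf
    have e1 : (Multiset.filter (fun a => a < ε ^ 2) C).sum
        = (Multiset.map id (Multiset.filter (fun a => a < ε ^ 2) C)).sum := by
      rw [Multiset.map_id]
    rw [e1, Finset.sum_multiset_map_count]
    have hsub : (Multiset.filter (fun a => a < ε ^ 2) C).toFinset ⊆ S.toFinset := by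
      intro u hu
      rw [Multiset.mem_toFinset, Multiset.mem_filter] at hu
      rw [Multiset.mem_toFinset]
      exact hJS u ((hxconf C hC).2 u hu.1) hu.2
    rw [Finset.sum_subset hsub]
    · apply Finset.sum_congr rfl
      intro u hu
      have huS : u ∈ S := Multiset.mem_toFinset.mp hu
      have hult : u < ε ^ 2 := by
        rw [hS, Multiset.mem_filter] at huS
        exact huS.2
      rw [Multiset.count_filter, if_pos hult, nsmul_eq_mul, id]
    · intro u _ hu
      rw [Multiset.count_eq_zero_of_notMem (fun hmem => hu (Multiset.mem_toFinset.mpr hmem))]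
      simp
  have hSsum_eq : S.sum = ∑ u ∈ S.toFinset, (S.count u : ℝ) * u := by
    have e1 : S.sum = (Multiset.map id S).sum := by rw [Multiset.map_id]
    rw [e1, Finset.sum_multiset_map_count]
    apply Finset.sum_congr rfl
    intro u _
    rw [nsmul_eq_mul, id]
  have hwsumσ : 2 * S.sum ≤ wsum (σf ε) x := by
    have e1 : wsum (σf ε) x = ∑ u ∈ S.toFinset, (∑ C ∈ x.support, x C * (C.count u : ℝ)) * u := by
      rw [wsum_eq_support_sum]
      calc ∑ C ∈ x.support, x C * σf ε C
          = ∑ C ∈ x.support, ∑ u ∈ S.toFinset, x C * ((C.count u : ℝ) * u) := by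
            apply Finset.sum_congr rfl
            intro C hC
            rw [hσeq C hC, Finset.mul_sum]
        _ = ∑ u ∈ S.toFinset, ∑ C ∈ x.support, x C * ((C.count u : ℝ) * u) := Finset.sum_comm
        _ = ∑ u ∈ S.toFinset, (∑ C ∈ x.support, x C * (C.count u : ℝ)) * u := by
            apply Finset.sum_congr rfl
            intro u _
            rw [Finset.sum_mul]
            exact Finset.sum_congr rfl fun C _ => by ring
    rw [e1, hSsum_eq, Finset.mul_sum]
    apply Finset.sum_le_sum
    intro u hu
    have huS : u ∈ S := Multiset.mem_toFinset.mp hu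
    have huJ : u ∈ J := Multiset.mem_of_le hSJ huS
    have hu0 : 0 ≤ u := le_of_lt (hJ u huJ).1
    have h1 : (S.count u : ℝ) ≤ (J.count u : ℝ) := by
      exact_mod_cast Multiset.count_le_of_le u hSJ
    have h2 := hxcov u huJ
    calc 2 * ((S.count u : ℝ) * u) = (2 * (S.count u : ℝ)) * u := by ring
      _ ≤ (∑ C ∈ x.support, x C * (C.count u : ℝ)) * u := by
          apply mul_le_mul_of_nonneg_right _ hu0
          linarith
  have hwm : 2 * S.sum / ε - 2 * X ≤ wsum (fun C => (mf ε C : ℝ)) x := by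
    have e1 : wsum (fun C => σf ε C / ε - 2) x
        = wsum (σf ε) x / ε - 2 * X := by
      rw [wsum_sub, wsum_div, wsum_const, ← hXw]
    have e2 : wsum (fun C => σf ε C / ε - 2) x ≤ wsum (fun C => (mf ε C : ℝ)) x := by
      apply wsum_mono _ _ _ hx0
      intro C hC
      exact hmge C (hCfacts C hC).2.1
    have e3 : 2 * S.sum / ε ≤ wsum (σf ε) x / ε :=
      (div_le_div_iff_of_pos_right hε).mpr hwsumσ
    linarith
  have hG0 : 0 ≤ G := le_max_left 0 _
  have hwmf0 : 0 ≤ wsum (fun C => (mf ε C : ℝ)) x :=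
    wsum_nonneg _ _ hx0 (fun C => Nat.cast_nonneg _)
  have hGle : G ≤ 2 * X + 2 := by
    apply max_le (by linarith)
    have hc : ((⌈S.sum / ε⌉₊ : ℕ) : ℝ) < S.sum / ε + 1 := Nat.ceil_lt_add_one (by positivity)
    have h2 : 2 * S.sum / ε - 2 * X ≤ wsum (fun C => (mf ε C : ℝ)) x := hwm
    have h3 : 2 * (S.sum / ε) = 2 * S.sum / ε := by ring
    linarith
  have hw00 : 0 ≤ w0 := div_nonneg hG0 (le_of_lt hk0)
  have hw0k : w0 * (k : ℝ) = G := div_mul_cancel₀ G (ne_of_gt hk0)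
  have hw0le : w0 ≤ 8 * ε * X + 2 := by
    by_cases h4 : ε ≤ 1 / 4
    · have hhalf : (0:ℝ) < 1 / (2 * ε) := by positivity
      have h2e : (2:ℝ) ≤ 1 / (2 * ε) := by
        rw [le_div_iff₀ (by positivity)]
        linarith
      have he : 1 / ε = 2 * (1 / (2 * ε)) := by field_simp
      have hk2 : 1 / (2 * ε) ≤ (k : ℝ) := by
        have := hkr
        rw [he] at this
        linarith
      have hd1 : w0 ≤ G / (1 / (2 * ε)) := by
        rw [hw0def]
        exact div_le_div_of_nonneg_left hG0 hhalf hk2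
      have hd2 : G / (1 / (2 * ε)) = G * (2 * ε) := by
        rw [div_eq_mul_inv, one_div, inv_inv]
      have hd3 : G * (2 * ε) ≤ (2 * X + 2) * (2 * ε) :=
        mul_le_mul_of_nonneg_right hGle (by positivity)
      have hexp : (2 * X + 2) * (2 * ε) = 4 * (ε * X) + 4 * ε := by ring
      have hp : 0 ≤ ε * X := mul_nonneg (le_of_lt hε) hX0
      have h8 : 8 * ε * X = 8 * (ε * X) := by ring
      rw [h8]
      linarith
    · push_neg at h4
      have h5 : w0 ≤ w0 * (k : ℝ) := le_mul_of_one_le_right hw00 (by exact_mod_cast hk1)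
      rw [hw0k] at h5
      have hp : 0 ≤ (8 * ε - 2) * X := mul_nonneg (by linarith) hX0
      have hexp2 : (8 * ε - 2) * X = 8 * ε * X - 2 * X := by ring
      linarith
  -- value of the new solution
  have hval : (∑ C ∈ x'.support, x' C) = X + w0 := by
    have e0 : (∑ C ∈ x'.support, x' C) = wsum (fun _ => 1) x' := by
      rw [wsum_eq_support_sum]
      exact Finset.sum_congr rfl fun C _ => by ring
    rw [e0, hx'def, wsum_add, hmass_y, wsum_single, mul_one]
  -- nonnegativity
  have hx'0 : ∀ C0, 0 ≤ x' C0 := by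
    intro C0
    rw [hx'def, Finsupp.add_apply]
    apply add_nonneg
    · rw [hy]
      rw [show (x.sum fun C w' => w' • Finsupp.mapDomain
          (· + Multiset.replicate (mf ε C) ε) (DLF T κ (lCf ε C)))
        = ∑ C ∈ x.support, x C • Finsupp.mapDomain
          (· + Multiset.replicate (mf ε C) ε) (DLF T κ (lCf ε C)) from rfl]
      rw [Finsupp.finset_sum_apply]
      apply Finset.sum_nonneg
      intro C _
      rw [Finsupp.smul_apply, smul_eq_mul]
      exact mul_nonneg (hx0 C) (mapDomain_nonneg _ _ (hDLnn C) C0)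
    · rw [Finsupp.single_apply]
      split
      · exact hw00
      · exact le_rfl
  have hεS' : ⌈S.sum / ε⌉₊ ≠ 0 → ε ∈ S' := by
    intro hne
    rw [hS', Multiset.mem_replicate]
    exact ⟨hne, rfl⟩
  -- support conditions
  have hx'supp : ∀ C0 ∈ x'.support, IsConfig B C0 ∧ ∀ a ∈ C0, a ∈ S' + M' := by
    intro C0 hC0
    rw [hx'def] at hC0
    have hun := Finsupp.support_add hC0
    rw [Finset.mem_union] at hun
    rcases hun with hyC | hsC
    · -- C0 comes from y
      rw [hy] at hyC
      rw [show (x.sum fun C w' => w' • Finsupp.mapDomain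
          (· + Multiset.replicate (mf ε C) ε) (DLF T κ (lCf ε C)))
        = ∑ C ∈ x.support, x C • Finsupp.mapDomain
          (· + Multiset.replicate (mf ε C) ε) (DLF T κ (lCf ε C)) from rfl] at hyC
      have h1 := Finsupp.support_finset_sum hyC
      rw [Finset.mem_biUnion] at h1
      obtain ⟨C, hC, hC0m⟩ := h1
      have h2 := Finsupp.support_smul hC0m
      have h3 := Finsupp.mapDomain_support h2
      rw [Finset.mem_image] at h3
      obtain ⟨D, hD, rfl⟩ := h3
      obtain ⟨hpos, hσ0, hlmem, hsum_split⟩ := hCfacts C hC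
      obtain ⟨hdem, hsum1, hfail⟩ := (hxconf C hC).1
      obtain ⟨hDsum, hDelt⟩ := DLF_support T κ (· ∈ M') hκs (lCf ε C)
        (fun b hb => (hlmem b hb).1) D hD
      have hmleC := hmle C hσ0
      have hC0sum : (D + Multiset.replicate (mf ε C) ε).sum = D.sum + (mf ε C : ℝ) * ε := by
        rw [Multiset.sum_add, Multiset.sum_replicate, nsmul_eq_mul]
      have hC0le : (D + Multiset.replicate (mf ε C) ε).sum ≤ C.sum := by
        rw [hC0sum]
        linarith
      have hmemC0 : ∀ a ∈ D + Multiset.replicate (mf ε C) ε,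
          (a ∈ M') ∨ (a = ε ∧ mf ε C ≠ 0) := by
        intro a ha
        rw [Multiset.mem_add] at ha
        rcases ha with ha | ha
        · exact Or.inl (hDelt a ha).1
        · rw [Multiset.mem_replicate] at ha
          exact Or.inr ⟨ha.2, ha.1⟩
      have hSpos' : mf ε C ≠ 0 → ⌈S.sum / ε⌉₊ ≠ 0 := by
        intro hmne
        have hm1C := hm1 C hσ0 hmne
        have hmge1 : (1:ℝ) ≤ (mf ε C : ℝ) := by
          have : (1:ℕ) ≤ mf ε C := Nat.one_le_iff_ne_zero.mpr hmne
          exact_mod_cast this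
        have hσpos : 0 < σf ε C := by nlinarith
        have hfil_ne : Multiset.filter (fun a => a < ε ^ 2) C ≠ 0 := by
          intro h0
          unfold σf at hσpos
          rw [h0] at hσpos
          simp at hσpos
        obtain ⟨a0, ha0⟩ := Multiset.exists_mem_of_ne_zero hfil_ne
        rw [Multiset.mem_filter] at ha0
        have ha0J : a0 ∈ J := (hxconf C hC).2 a0 ha0.1
        have ha0S : a0 ∈ S := hJS a0 ha0J ha0.2
        have ha0pos : 0 < a0 := hSpos a0 ha0S
        have hSsum_pos : 0 < S.sum :=
          lt_of_lt_of_le ha0pos (Multiset.single_le_sum (fun b hb => le_of_lt (hSpos b hb)) a0 ha0S)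
        rw [← Nat.pos_iff_ne_zero, Nat.ceil_pos]
        positivity
      constructor
      · refine ⟨?_, ?_, ?_⟩
        · intro a ha
          rcases hmemC0 a ha with haM' | ⟨haε, _⟩
          · exact hJ a (hMmem a (hM'M a haM'))
          · rw [haε]
            exact ⟨hε, hεB⟩
        · linarith
        · intro a ha
          rw [Multiset.mem_add] at ha
          rcases ha with ha | ha
          · obtain ⟨_, b, hb, hab⟩ := hDelt a ha
            have hbC : b ∈ C := (hlmem b hb).2.1
            have := hfail b hbC
            linarith
          · rw [Multiset.mem_replicate] at ha
            obtain ⟨hmne, haε⟩ := ha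
            rw [haε]
            have hm1C := hm1 C hσ0 hmne
            have : (D + Multiset.replicate (mf ε C) ε).sum + ε ≤ C.sum := by
              rw [hC0sum]
              linarith
            linarith
      · intro a ha
        rcases hmemC0 a ha with haM' | ⟨haε, hmne⟩
        · rw [Multiset.mem_add]
          exact Or.inr haM'
        · rw [haε, Multiset.mem_add]
          exact Or.inl (hεS' (hSpos' hmne))
    · -- C0 is the extra replicate configuration
      have h1 := Finsupp.support_single_subset hsC
      rw [Finset.mem_singleton] at h1
      subst h1
      have hw0ne : w0 ≠ 0 := by
        rw [Finsupp.mem_support_iff] at hsC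
        intro h0
        rw [h0] at hsC
        simp at hsC
      have hGpos : 0 < G := lt_of_le_of_ne hG0 (fun h => hw0ne (by rw [hw0def, ← h, zero_div]))
      have hceil : ⌈S.sum / ε⌉₊ ≠ 0 := by
        intro h0
        rw [hGdef] at hGpos
        rw [h0] at hGpos
        simp only [Nat.cast_zero, mul_zero, zero_sub] at hGpos
        have : max 0 (-wsum (fun C => (mf ε C : ℝ)) x) = 0 :=
          max_eq_left (by linarith)
        rw [this] at hGpos
        exact lt_irrefl 0 hGpos
      have hsumrep : (Multiset.replicate k ε).sum = (k : ℝ) * ε := by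
        rw [Multiset.sum_replicate, nsmul_eq_mul]
      constructor
      · refine ⟨?_, ?_, ?_⟩
        · intro a ha
          rw [Multiset.eq_of_mem_replicate ha]
          exact ⟨hε, hεB⟩
        · rw [hsumrep]; linarith
        · intro a ha
          rw [Multiset.eq_of_mem_replicate ha, hsumrep]
          linarith
      · intro a ha
        rw [Multiset.eq_of_mem_replicate ha, Multiset.mem_add]
        exact Or.inl (hεS' hceil)
  -- coverage conditions
  have hx'cov : ∀ t ∈ S' + M',
      2 * (((S' + M').count t : ℕ) : ℝ) ≤ ∑ C0 ∈ x'.support, x' C0 * (C0.count t : ℝ) := by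
    intro t ht
    have e0 : ∑ C0 ∈ x'.support, x' C0 * (C0.count t : ℝ)
        = wsum (fun C0 => (C0.count t : ℝ)) x' := by
      rw [wsum_eq_support_sum]
    have e1 : wsum (fun C0 => (C0.count t : ℝ)) x'
        = wsum (fun C0 => (C0.count t : ℝ)) y
          + w0 * ((Multiset.replicate k ε).count t : ℝ) := by
      rw [hx'def, wsum_add, wsum_single]
    have e2 : ((S' + M').count t : ℝ) = (S'.count t : ℝ) + (M'.count t : ℝ) := by
      rw [Multiset.count_add]
      push_cast
      ring
    rw [e0, e1, e2, hcovy_split t]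
    by_cases hte : ε = t
    · subst hte
      have eS' : (S'.count ε : ℝ) = ((⌈S.sum / ε⌉₊ : ℕ) : ℝ) := by
        rw [hS', Multiset.count_replicate, if_pos rfl]
      have erep : ((Multiset.replicate k ε).count ε : ℝ) = (k : ℝ) := by
        rw [Multiset.count_replicate, if_pos rfl]
      rw [eS', erep, if_pos rfl]
      have hA := hcovy_any ε
      have hGlb : 2 * ((⌈S.sum / ε⌉₊ : ℕ) : ℝ) - wsum (fun C => (mf ε C : ℝ)) x ≤ G :=
        le_max_right _ _
      have : w0 * (k : ℝ) = G := hw0k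
      linarith
    · have htM' : t ∈ M' := by
        rw [Multiset.mem_add] at ht
        rcases ht with ht | ht
        · exact absurd (Multiset.eq_of_mem_replicate (by rwa [hS'] at ht)).symm hte
        · exact ht
      have eS' : (S'.count t : ℝ) = 0 := by
        rw [hS', Multiset.count_replicate, if_neg hte]
        norm_num
      have erep : ((Multiset.replicate k ε).count t : ℝ) = 0 := by
        rw [Multiset.count_replicate, if_neg hte]
        norm_num
      rw [eS', erep, if_neg hte]
      have hA := hcovy_any t
      linarith
  refine ⟨x', ⟨hx'0, ?_, ?_⟩, ?_⟩
  · intro C hC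
    exact hx'supp C hC
  · exact hx'cov
  · rw [hval, hXdef]
    have : (1 + 8 * ε) * X = X + 8 * ε * X := by ring
    rw [← hXdef, this]
    linarith

lemma singleton_solution (B : ℝ) (J : Multiset ℝ) (hB : 1 ≤ B) (hJ : IsDemandMultiset B J) :
    ∃ x : Multiset ℝ →₀ ℝ, IsLPSolution B J x := by
  classical
  refine ⟨∑ t ∈ J.toFinset, Finsupp.single ({t} : Multiset ℝ) (2 * (J.count t : ℝ)), ?_, ?_, ?_⟩
  · intro C
    rw [Finsupp.finset_sum_apply]
    apply Finset.sum_nonneg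
    intro t _
    rw [Finsupp.single_apply]
    split
    · positivity
    · exact le_rfl
  · intro C hC
    have h1 := Finsupp.support_finset_sum hC
    rw [Finset.mem_biUnion] at h1
    obtain ⟨t, ht, hC2⟩ := h1
    have h2 := Finsupp.support_single_subset hC2
    rw [Finset.mem_singleton] at h2
    subst h2
    have htJ : t ∈ J := Multiset.mem_toFinset.mp ht
    obtain ⟨ht0, htB⟩ := hJ t htJ
    have hsum : ({t} : Multiset ℝ).sum = t := Multiset.sum_singleton t
    refine ⟨⟨?_, ?_, ?_⟩, ?_⟩
    · intro a ha
      rw [Multiset.mem_singleton] at ha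
      rw [ha]
      exact ⟨ht0, htB⟩
    · rw [hsum]
      exact le_trans htB (min_le_left _ _)
    · intro a ha
      rw [Multiset.mem_singleton] at ha
      rw [ha, hsum]
      have : t ≤ B / 2 := le_trans htB (min_le_right _ _)
      linarith
    · intro a ha
      rw [Multiset.mem_singleton] at ha
      rw [ha]
      exact htJ
  · intro t htJ
    set x₀ := ∑ t ∈ J.toFinset, Finsupp.single ({t} : Multiset ℝ) (2 * (J.count t : ℝ)) with hx₀
    have hx₀nn : ∀ C, 0 ≤ x₀ C := by
      intro C
      rw [hx₀, Finsupp.finset_sum_apply]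
      apply Finset.sum_nonneg
      intro t' _
      rw [Finsupp.single_apply]
      split
      · positivity
      · exact le_rfl
    have happ : x₀ ({t} : Multiset ℝ) = 2 * (J.count t : ℝ) := by
      rw [hx₀, Finsupp.finset_sum_apply]
      have hterm : ∀ t' ∈ J.toFinset,
          (Finsupp.single ({t'} : Multiset ℝ) (2 * (J.count t' : ℝ))) ({t} : Multiset ℝ)
          = if t = t' then 2 * (J.count t' : ℝ) else 0 := by
        intro t' _
        rw [Finsupp.single_apply]
        by_cases h : t = t'
        · rw [if_pos (by rw [h]), if_pos h]
        · rw [if_neg (by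
            intro hh
            exact h (Multiset.singleton_inj.mp hh).symm), if_neg h]
      rw [Finset.sum_congr rfl hterm, Finset.sum_ite_eq J.toFinset t _,
        if_pos (Multiset.mem_toFinset.mpr htJ)]
    have hmem : ({t} : Multiset ℝ) ∈ x₀.support := by
      rw [Finsupp.mem_support_iff, happ]
      have : (0:ℝ) < (J.count t : ℝ) := by
        exact_mod_cast Multiset.count_pos.mpr htJ
      positivity
    calc 2 * (J.count t : ℝ) = x₀ ({t} : Multiset ℝ) * ((({t} : Multiset ℝ).count t : ℕ) : ℝ) := by
          rw [happ, Multiset.count_singleton, if_pos rfl]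
          norm_num
      _ ≤ ∑ C ∈ x₀.support, x₀ C * ((C.count t : ℕ) : ℝ) := by
          apply Finset.single_le_sum (f := fun C => x₀ C * ((C.count t : ℕ) : ℝ)) _ hmem
          intro C _
          exact mul_nonneg (hx₀nn C) (Nat.cast_nonneg _)

lemma LP_nonneg_mem (B : ℝ) (J : Multiset ℝ) :
    ∀ v ∈ {v | ∃ x : Multiset ℝ →₀ ℝ, IsLPSolution B J x ∧ (∑ C ∈ x.support, x C) = v},
      0 ≤ v := by
  rintro v ⟨x, hx, rfl⟩
  exact Finset.sum_nonneg fun C _ => hx.1 C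

end Stmt13Aux

open Stmt13Aux in
theorem stmt_13 :
    ∃ c : ℝ, 0 < c ∧
      ∀ (B ε : ℝ) (J S M M' S' : Multiset ℝ) (n q : ℕ) (s : ℕ → ℝ),
        1 ≤ B → 0 < ε → ε ≤ 1 / 2 → IsDemandMultiset B J →
        S = J.filter (fun a => a < ε ^ 2) →
        M = J - S →
        1 ≤ n →
        (∀ i j, 1 ≤ i → i ≤ j → j ≤ n → s j ≤ s i) →
        M = (Finset.Icc 1 n).val.map s →
        q = ⌈ε ^ 3 * (n : ℝ)⌉₊ →
        M' = (Finset.Ioc q n).val.map (fun i => s (q * ((i - 1) / q) + 1)) →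
        S' = Multiset.replicate ⌈S.sum / ε⌉₊ ε →
        LPmach B (S' + M') ≤ (1 + c * ε) * LPmach B J + c := by
  refine ⟨8, by norm_num, ?_⟩
  intro B ε J S M M' S' n q s hB hε hε2 hJ hS hM hn hmono hMs hq hM' hS'
  set SJ := {v | ∃ x : Multiset ℝ →₀ ℝ, IsLPSolution B J x ∧ (∑ C ∈ x.support, x C) = v}
    with hSJ
  have hSJne : SJ.Nonempty := by
    obtain ⟨x, hx⟩ := singleton_solution B J hB hJ
    exact ⟨_, x, hx, rfl⟩
  have hSJbdd : BddBelow SJ := ⟨0, fun v hv => LP_nonneg_mem B J v hv⟩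
  have hS2bdd : BddBelow {v | ∃ x : Multiset ℝ →₀ ℝ, IsLPSolution B (S' + M') x ∧
      (∑ C ∈ x.support, x C) = v} := ⟨0, fun v hv => LP_nonneg_mem B (S' + M') v hv⟩
  have hstep : ∀ v ∈ SJ, LPmach B (S' + M') ≤ (1 + 8 * ε) * v + 2 := by
    rintro v ⟨x, hx, rfl⟩
    obtain ⟨x', hx', hval⟩ := key_transform B ε J S M M' S' n q s hB hε hε2 hJ hS hM hn
      hmono hMs hq hM' hS' x hx
    calc LPmach B (S' + M') ≤ ∑ C ∈ x'.support, x' C :=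
          csInf_le hS2bdd ⟨x', hx', rfl⟩
      _ ≤ (1 + 8 * ε) * (∑ C ∈ x.support, x C) + 2 := hval
  have hfin : LPmach B (S' + M') ≤ (1 + 8 * ε) * LPmach B J + 2 := by
    apply le_of_forall_pos_le_add
    intro δ hδ
    have h18 : (0:ℝ) < 1 + 8 * ε := by linarith
    obtain ⟨v, hvSJ, hvlt⟩ : ∃ v ∈ SJ, v < sInf SJ + δ / (1 + 8 * ε) := by
      by_contra hcon
      push_neg at hcon
      have : sInf SJ + δ / (1 + 8 * ε) ≤ sInf SJ := le_csInf hSJne hcon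
      have : (0:ℝ) < δ / (1 + 8 * ε) := by positivity
      linarith
    have h1 := hstep v hvSJ
    have h2 : (1 + 8 * ε) * v ≤ (1 + 8 * ε) * (sInf SJ + δ / (1 + 8 * ε)) :=
      mul_le_mul_of_nonneg_left (le_of_lt hvlt) (le_of_lt h18)
    have h3 : (1 + 8 * ε) * (sInf SJ + δ / (1 + 8 * ε)) = (1 + 8 * ε) * sInf SJ + δ := by
      rw [mul_add, mul_div_cancel₀ _ (ne_of_gt h18)]
    have hLP : LPmach B J = sInf SJ := rfl
    rw [hLP]
    linarith
  have hLPJ0 : 0 ≤ LPmach B J := by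
    have hLP : LPmach B J = sInf SJ := rfl
    rw [hLP]
    exact le_csInf hSJne (fun v hv => LP_nonneg_mem B J v hv)
  linarith
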